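/- The scaled smoothing is local: let φ be a smoothing kernel with associated set G, let f, g ∈ C_{‖·‖}, χ > 0 and x ∈ E. If f(y) = g(y) for all y ∈ x + χG, then S_χ[f](x) = S_χ[g](x). Consequently, if f and g coincide on U + χG for an open set U ⊆ E, then S_χ[f] and S_χ[g] coincide on U, and in particular ∇S_χ[f] = ∇S_χ[g] on U. -/

import Mathlib

open Set Pointwise

/-- `N` is a norm on the real vector space `E`. -/
structure IsNorm {E : Type*} [AddCommGroup E] [Module ℝ E] (N : E → ℝ) : Prop where
  nonneg : ∀ x, 0 ≤ N x
  eq_zero_iff : ∀ x, N x = 0 ↔ x = 0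
  smul : ∀ (c : ℝ) (x : E), N (c • x) = |c| * N x
  add_le : ∀ x y, N (x + y) ≤ N x + N y

/-- The norm dual to `N` (w.r.t. the inner product identification). -/
noncomputable def dualNorm {E : Type*} [NormedAddCommGroup E] [InnerProductSpace ℝ E]
    (N : E → ℝ) (ξ : E) : ℝ :=
  sSup ((fun x => (inner ℝ ξ x : ℝ)) '' {x : E | N x ≤ 1})

/-- `f` is Lipschitz continuous with constant 1 w.r.t. the norm `N`. -/
def LipWrt {E : Type*} [AddCommGroup E] [Module ℝ E] (N : E → ℝ) (f : E → ℝ) : Prop :=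
  ∀ x y, |f x - f y| ≤ N (x - y)

/-- Membership in the class `C_{‖·‖}`: convex and 1-Lipschitz w.r.t. `N`. -/
def MemC {E : Type*} [AddCommGroup E] [Module ℝ E] (N : E → ℝ) (f : E → ℝ) : Prop :=
  ConvexOn ℝ Set.univ f ∧ LipWrt N f

/-- A smoothing kernel: a twice continuously differentiable convex function `φ` on an open
convex set `dom`, with `φ(0) = 0`, `∇φ(0) = 0` (property A), together with a compact convex
set `G ⊆ dom` with `0 ∈ int G` and `φ > N` on `∂G` (property B). -/
structure SmoothingKernel (E : Type*) [NormedAddCommGroup E] [InnerProductSpace ℝ E]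
    [FiniteDimensional ℝ E] (N : E → ℝ) where
  dom : Set E
  φ : E → ℝ
  dom_open : IsOpen dom
  dom_convex : Convex ℝ dom
  φ_smooth : ContDiffOn ℝ 2 φ dom
  φ_convex : ConvexOn ℝ dom φ
  zero_mem_dom : (0 : E) ∈ dom
  φ_zero : φ 0 = 0
  grad_zero : gradient φ 0 = 0
  G : Set E
  G_sub_dom : G ⊆ dom
  G_compact : IsCompact G
  G_convex : Convex ℝ G
  zero_mem_int : (0 : E) ∈ interior G
  φ_gt_norm : ∀ x ∈ frontier G, N x < φ x

/-- The scaled smoothing `S_χ[f](x) = min_{h ∈ χ·Dom φ} [f(x+h) + χ φ(h/χ)]`. -/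
noncomputable def smoothingScaled {E : Type*} [NormedAddCommGroup E] [InnerProductSpace ℝ E]
    [FiniteDimensional ℝ E] {N : E → ℝ} (K : SmoothingKernel E N) (χ : ℝ) (f : E → ℝ)
    (x : E) : ℝ :=
  sInf ((fun h => f (x + h) + χ * K.φ (χ⁻¹ • h)) '' (χ • K.dom))

variable {E : Type*} [NormedAddCommGroup E] [InnerProductSpace ℝ E]
  [FiniteDimensional ℝ E]

open scoped Topology

lemma smoothingScaled_eq_sInf_G {N : E → ℝ} (hN : IsNorm N) (K : SmoothingKernel E N)
    (f : E → ℝ) (hf : MemC N f) {χ : ℝ} (hχ : 0 < χ) (x : E) :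
    smoothingScaled K χ f x = sInf ((fun h => f (x + χ • h) + χ * K.φ h) '' K.G) := by
  set F : E → ℝ := fun h => f (x + χ • h) + χ * K.φ h with hFdef
  have himg : (fun h => f (x + h) + χ * K.φ (χ⁻¹ • h)) '' (χ • K.dom) = F '' K.dom := by
    rw [← Set.image_smul, Set.image_image]
    refine Set.image_congr fun h _ => ?_
    rw [smul_smul, inv_mul_cancel₀ hχ.ne', one_smul]
  -- continuity of f
  have hfc : Continuous f := by
    rw [← continuousOn_univ]
    exact hf.1.continuousOn isOpen_univ
  have hFc : ContinuousOn F K.dom := by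
    apply ContinuousOn.add
    · exact (hfc.comp (continuous_const.add (continuous_id.const_smul χ))).continuousOn
    · exact continuousOn_const.mul K.φ_smooth.continuousOn
  -- convexity of F on dom
  have hcomp : ConvexOn ℝ K.dom (fun h => f (x + χ • h)) := by
    refine ⟨K.dom_convex, fun a ha b hb ta tb hta htb hab => ?_⟩
    have key : x + χ • (ta • a + tb • b) = ta • (x + χ • a) + tb • (x + χ • b) := by
      have h1 : ta • x + tb • x = x := by rw [← add_smul, hab, one_smul]
      simp only [smul_add, smul_smul]
      rw [mul_comm ta χ, mul_comm tb χ]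
      conv_lhs => rw [← h1]
      abel
    dsimp only
    rw [key]
    exact hf.1.2 (mem_univ _) (mem_univ _) hta htb hab
  have hφ : ConvexOn ℝ K.dom (fun h => χ * K.φ h) := by
    simpa [smul_eq_mul] using K.φ_convex.smul hχ.le
  have hF : ConvexOn ℝ K.dom F := hcomp.add hφ
  -- key claim
  have key : ∀ h ∈ K.dom, ∃ y ∈ K.G, F y ≤ F h := by
    intro h hh
    by_cases hG : h ∈ K.G
    · exact ⟨h, hG, le_rfl⟩
    set S : Set ℝ := {t : ℝ | t ∈ Icc (0:ℝ) 1 ∧ t • h ∈ K.G} with hSdef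
    have hS0 : (0:ℝ) ∈ S := ⟨⟨le_rfl, zero_le_one⟩, by
      simpa using interior_subset K.zero_mem_int⟩
    have hSbdd : BddAbove S := ⟨1, fun t ht => ht.1.2⟩
    have hScont : Continuous fun t : ℝ => t • h := continuous_id.smul continuous_const
    have hSclosed : IsClosed S :=
      (isClosed_Icc.inter (K.G_compact.isClosed.preimage hScont))
    set t₀ : ℝ := sSup S with ht₀def
    have ht₀S : t₀ ∈ S := hSclosed.csSup_mem ⟨0, hS0⟩ hSbdd
    have ht₀G : t₀ • h ∈ K.G := ht₀S.2
    have ht₀1 : t₀ ≤ 1 := ht₀S.1.2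
    have ht₀lt1 : t₀ < 1 := by
      rcases lt_or_eq_of_le ht₀1 with h' | h'
      · exact h'
      · rw [h', one_smul] at ht₀G
        exact absurd ht₀G hG
    have ht₀pos : 0 < t₀ := by
      have hmem : ∀ᶠ t in 𝓝 (0:ℝ), t • h ∈ interior K.G := by
        have : (fun t : ℝ => t • h) ⁻¹' (interior K.G) ∈ 𝓝 (0:ℝ) := by
          apply hScont.continuousAt.preimage_mem_nhds
          simpa using isOpen_interior.mem_nhds K.zero_mem_int
        exact this
      obtain ⟨ε, hε, hball⟩ := Metric.eventually_nhds_iff.mp hmem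
      set t := min (ε/2) 1 with ht
      have htpos : 0 < t := lt_min (by linarith) one_pos
      have htS : t ∈ S := by
        refine ⟨⟨htpos.le, min_le_right _ _⟩, interior_subset (hball ?_)⟩
        rw [Real.dist_eq, sub_zero, abs_of_pos htpos]
        exact lt_of_le_of_lt (min_le_left _ _) (by linarith)
      exact lt_of_lt_of_le htpos (le_csSup hSbdd htS)
    have hfront : t₀ • h ∈ frontier K.G := by
      rw [K.G_compact.isClosed.frontier_eq]
      refine ⟨ht₀G, fun hint => ?_⟩
      have hmem : ∀ᶠ t in 𝓝 t₀, t • h ∈ interior K.G := by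
        apply hScont.continuousAt.preimage_mem_nhds
        exact isOpen_interior.mem_nhds hint
      obtain ⟨ε, hε, hball⟩ := Metric.eventually_nhds_iff.mp hmem
      set t := min (t₀ + ε/2) 1 with ht
      have htgt : t₀ < t := lt_min (by linarith) ht₀lt1
      have htS : t ∈ S := by
        refine ⟨⟨le_trans ht₀pos.le htgt.le, min_le_right _ _⟩, interior_subset (hball ?_)⟩
        rw [Real.dist_eq, abs_of_pos (by linarith : 0 < t - t₀)]
        have : t ≤ t₀ + ε/2 := min_le_left _ _
        linarith
      exact absurd (le_csSup hSbdd htS) (not_le.mpr htgt)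
    have hφge : N (t₀ • h) ≤ K.φ (t₀ • h) := (K.φ_gt_norm _ hfront).le
    -- F 0 ≤ F (t₀ • h)
    have hF0 : F 0 = f x := by simp [hFdef, K.φ_zero]
    have hlip : f x - f (x + χ • (t₀ • h)) ≤ χ * N (t₀ • h) := by
      have h1 := hf.2 x (x + χ • (t₀ • h))
      have h2 : x - (x + χ • (t₀ • h)) = -(χ • (t₀ • h)) := by abel
      rw [h2] at h1
      have hNneg : ∀ v : E, N (-v) = N v := fun v => by
        simpa using hN.smul (-1) v
      have h3 : N (-(χ • (t₀ • h))) = χ * N (t₀ • h) := by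
        rw [hNneg, hN.smul, abs_of_pos hχ]
      rw [h3] at h1
      calc f x - f (x + χ • (t₀ • h)) ≤ |f x - f (x + χ • (t₀ • h))| := le_abs_self _
        _ ≤ χ * N (t₀ • h) := h1
    have hF0le : F 0 ≤ F (t₀ • h) := by
      rw [hF0]
      have h4 := mul_le_mul_of_nonneg_left hφge hχ.le
      simp only [hFdef]
      linarith
    have hcvx := hF.2 hh K.zero_mem_dom ht₀pos.le (by linarith : (0:ℝ) ≤ 1 - t₀) (by ring)
    rw [smul_zero, add_zero, smul_eq_mul, smul_eq_mul] at hcvx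
    refine ⟨t₀ • h, ht₀G, ?_⟩
    have hmul : t₀ * F (t₀ • h) ≤ t₀ * F h := by
      nlinarith [mul_le_mul_of_nonneg_left hF0le (by linarith : (0:ℝ) ≤ 1 - t₀)]
    exact le_of_mul_le_mul_left hmul ht₀pos
  -- compare infima
  have hGne : K.G.Nonempty := ⟨0, interior_subset K.zero_mem_int⟩
  obtain ⟨y₀, hy₀G, hy₀min⟩ := K.G_compact.exists_isMinOn hGne (hFc.mono K.G_sub_dom)
  have hbddDom : BddBelow (F '' K.dom) := by
    refine ⟨F y₀, ?_⟩
    rintro _ ⟨h, hh, rfl⟩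
    obtain ⟨y, hyG, hle⟩ := key h hh
    exact (hy₀min hyG).trans hle
  have hbddG : BddBelow (F '' K.G) :=
    hbddDom.mono (Set.image_mono K.G_sub_dom)
  rw [smoothingScaled, himg]
  apply le_antisymm
  · exact csInf_le_csInf hbddDom (hGne.image F) (Set.image_mono K.G_sub_dom)
  · apply le_csInf ((hGne.mono K.G_sub_dom).image F)
    rintro b ⟨h, hh, rfl⟩
    obtain ⟨y, hyG, hle⟩ := key h hh
    exact (csInf_le hbddG (Set.mem_image_of_mem F hyG)).trans hle

/-- the scaled smoothing is local: if `f = g` on `x + χG` then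
`S_χ[f](x) = S_χ[g](x)`; consequently, if `f = g` on `U + χG` for an open `U`, then
`S_χ[f] = S_χ[g]` on `U` and `∇S_χ[f] = ∇S_χ[g]` on `U`. -/
theorem smoothingScaled_local
    {N : E → ℝ} (hN : IsNorm N) (K : SmoothingKernel E N)
    (f g : E → ℝ) (hf : MemC N f) (hg : MemC N g) (χ : ℝ) (hχ : 0 < χ) :
    (∀ x : E, (∀ h ∈ K.G, f (x + χ • h) = g (x + χ • h)) →
        smoothingScaled K χ f x = smoothingScaled K χ g x) ∧
    ∀ U : Set E, IsOpen U → (∀ u ∈ U, ∀ h ∈ K.G, f (u + χ • h) = g (u + χ • h)) →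
      Set.EqOn (smoothingScaled K χ f) (smoothingScaled K χ g) U ∧
      Set.EqOn (gradient (smoothingScaled K χ f)) (gradient (smoothingScaled K χ g)) U := by
  have H1 : ∀ x : E, (∀ h ∈ K.G, f (x + χ • h) = g (x + χ • h)) →
      smoothingScaled K χ f x = smoothingScaled K χ g x := by
    intro x hx
    rw [smoothingScaled_eq_sInf_G hN K f hf hχ x, smoothingScaled_eq_sInf_G hN K g hg hχ x]
    congr 1
    exact Set.image_congr fun h hh => by rw [hx h hh]
  refine ⟨H1, fun U hU hfg => ?_⟩
  have hEq : Set.EqOn (smoothingScaled K χ f) (smoothingScaled K χ g) U :=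
    fun u hu => H1 u (hfg u hu)
  refine ⟨hEq, fun u hu => ?_⟩
  have hev : smoothingScaled K χ f =ᶠ[nhds u] smoothingScaled K χ g :=
    Filter.eventuallyEq_of_mem (hU.mem_nhds hu) hEq
  exact hev.gradient_eq
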